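/- arXiv:2207.09687 — 2 statements merged into one kernel-verified Lean document; each statement's English description precedes it below -/
import Mathlib

section
/- Let M = Z^d with standard basis e₁,…,e_d, let ρ = (−(d−1)/2, −(d−3)/2, …, (d−1)/2) ∈ Q^d, and let χ₀ = (1,…,1). For t ∈ R, the intersection of the set { Σ_{i>j} c_{ij}(e_i − e_j) + t·χ₀ : −1 ≤ c_{ij} ≤ 0 } ⊂ R^d with the dominant cone { x₁ ≤ x₂ ≤ ⋯ ≤ x_d } consists exactly of the single point t·χ₀. -/
/-- `(Σ(d)/2 - ρ + tχ₀) ∩ M⁺ = {tχ₀}` : the set of vectors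
`Σ_{i>j} c_{ij}(e_i - e_j) + t·(1,…,1)` with `-1 ≤ c_{ij} ≤ 0`, intersected with the
dominant cone `x₁ ≤ ⋯ ≤ x_d`, is exactly the single point `t·(1,…,1)`. -/
theorem weight_polytope_inter_dominant (d : ℕ) (hd : 1 ≤ d) (t : ℝ) :
    {x : Fin d → ℝ |
        (∃ c : Fin d → Fin d → ℝ, (∀ i j : Fin d, j < i → c i j ∈ Set.Icc (-1 : ℝ) 0) ∧
          x = (∑ i : Fin d, ∑ j : Fin d,
                if j < i then c i j • (Pi.single i (1 : ℝ) - Pi.single j 1) else 0)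
              + fun _ => t) ∧ Monotone x}
      = {fun _ => t} := by
  have hd0 : 0 < d := hd
  ext x
  simp only [Set.mem_setOf_eq, Set.mem_singleton_iff]
  constructor
  · rintro ⟨⟨c, hc, rfl⟩, hmono⟩
    set S : Fin d → ℝ := ∑ i : Fin d, ∑ j : Fin d,
        if j < i then c i j • (Pi.single i (1 : ℝ) - Pi.single j 1) else 0 with hSdef
    have key : ∀ k : Fin d, S k = ∑ i : Fin d, ∑ j : Fin d,
        if j < i then c i j * ((if k = i then (1:ℝ) else 0) - (if k = j then 1 else 0))
        else 0 := by
      intro k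
      simp [hSdef, Finset.sum_apply, Pi.single_apply, apply_ite (fun f : Fin d → ℝ => f k)]
    set z : Fin d := ⟨0, hd0⟩ with hz
    set l : Fin d := ⟨d - 1, Nat.sub_lt hd0 one_pos⟩ with hl
    have nonneg : 0 ≤ S z := by
      rw [key]
      apply Finset.sum_nonneg; intro i _
      apply Finset.sum_nonneg; intro j _
      by_cases h : j < i
      · rw [if_pos h]
        have hi : z ≠ i := by
          intro he
          have h1 : (j : ℕ) < (i : ℕ) := h
          have h2 : (i : ℕ) = 0 := by rw [← he]
          omega
        rw [if_neg hi]
        have hcij := hc i j h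
        by_cases hj : z = j
        · rw [if_pos hj]
          nlinarith [hcij.2]
        · rw [if_neg hj]; simp
      · rw [if_neg h]
    have nonpos : S l ≤ 0 := by
      rw [key]
      apply Finset.sum_nonpos; intro i _
      apply Finset.sum_nonpos; intro j _
      by_cases h : j < i
      · rw [if_pos h]
        have hj : l ≠ j := by
          intro he
          have h1 : (j : ℕ) < (i : ℕ) := h
          have h2 : (i : ℕ) < d := i.isLt
          have h3 : (j : ℕ) = d - 1 := by rw [← he]
          omega
        rw [if_neg hj]
        have hcij := hc i j h
        by_cases hi : l = i
        · rw [if_pos hi]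
          nlinarith [hcij.2]
        · rw [if_neg hi]; simp
      · rw [if_neg h]
    funext k
    have hzk : z ≤ k := by
      simp [hz, Fin.le_def]
    have hkl : k ≤ l := by
      have := k.isLt
      simp [hl, Fin.le_def]
      omega
    have h1 := hmono hzk
    have h2 := hmono hkl
    simp only [Pi.add_apply] at h1 h2 ⊢
    have : (S + fun _ => t) = S + fun _ => t := rfl
    -- h1 : S z + t ≤ S k + t, h2 : S k + t ≤ S l + t
    linarith
  · rintro rfl
    refine ⟨⟨fun _ _ => 0, fun i j _ => ?_, ?_⟩, monotone_const⟩
    · simp [Set.mem_Icc]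
    · funext k
      simp
end

section
/- For real numbers a > 0, t = a/2 − ε with 0 < ε < 1/2, and d ≥ 1: the set of integer points χ ∈ Z^d lying in { Σ_i c_i e_i + Σ_{i>j} c'_{ij}(e_i − e_j) + t·χ₀ : −a/2 ≤ c_i ≤ a/2, −1 ≤ c'_{ij} ≤ 0 } and in the dominant cone {x₁ ≤ ⋯ ≤ x_d} equals { (x₁,…,x_d) ∈ Z^d : 0 ≤ x₁ ≤ ⋯ ≤ x_d ≤ a−1 }, when a is a positive integer. -/
/-- The integer points of `(1/2)Σ_a(d) - ρ + tχ₀` (with `t = a/2 - ε`) lying in the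
dominant cone are exactly the weakly increasing integer sequences with entries in
`[0, a-1]`. -/
theorem magic_window_weights (a : ℕ) (ha : 1 ≤ a) (ε : ℝ) (hε : 0 < ε) (hε' : ε < 1/2)
    (d : ℕ) (hd : 1 ≤ d) :
    {χ : Fin d → ℤ |
        (∃ c : Fin d → ℝ, ∃ c' : Fin d → Fin d → ℝ,
          (∀ i : Fin d, c i ∈ Set.Icc (-(a : ℝ)/2) ((a : ℝ)/2)) ∧
          (∀ i j : Fin d, j < i → c' i j ∈ Set.Icc (-1 : ℝ) 0) ∧
          (fun m => (χ m : ℝ))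
            = (∑ i : Fin d, c i • (Pi.single i (1 : ℝ) : Fin d → ℝ))
              + (∑ i : Fin d, ∑ j : Fin d,
                  if j < i then c' i j • (Pi.single i (1 : ℝ) - Pi.single j 1) else 0)
              + fun _ => (a : ℝ)/2 - ε) ∧ Monotone χ}
      = {χ : Fin d → ℤ | Monotone χ ∧ ∀ i, 0 ≤ χ i ∧ χ i ≤ (a : ℤ) - 1} := by
  ext χ
  simp only [Set.mem_setOf_eq]
  constructor
  · rintro ⟨⟨c, c', hc, hc', heq⟩, hmono⟩
    refine ⟨hmono, fun m => ?_⟩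
    set L : Fin d := ⟨d - 1, by omega⟩ with hLdef
    set Z : Fin d := ⟨0, by omega⟩ with hZdef
    have key : ∀ m : Fin d, (χ m : ℝ) = c m
        + (∑ i : Fin d, ∑ j : Fin d, if j < i then
            c' i j * ((if m = i then (1:ℝ) else 0) - (if m = j then (1:ℝ) else 0)) else 0)
        + ((a:ℝ)/2 - ε) := by
      intro m
      have h := congrFun heq m
      simpa [Finset.sum_apply, ite_apply, Pi.single_apply, mul_ite, mul_one, mul_zero,
        Finset.sum_ite_eq] using h
    have hSL : (∑ i : Fin d, ∑ j : Fin d, if j < i then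
        c' i j * ((if L = i then (1:ℝ) else 0) - (if L = j then (1:ℝ) else 0)) else 0) ≤ 0 := by
      apply Finset.sum_nonpos; intro i _
      apply Finset.sum_nonpos; intro j _
      by_cases h1 : j < i
      · have hLj : L ≠ j := by
          intro h
          have hj : j.val = d - 1 := by rw [← h]
          have h2 : i.val < d := i.isLt
          have h3 : j.val < i.val := h1
          omega
        rw [if_pos h1, if_neg hLj]
        by_cases h2 : L = i
        · rw [if_pos h2]
          have := (hc' i j h1).2
          linarith
        · rw [if_neg h2]; simp
      · rw [if_neg h1]
    have hSZ : (0:ℝ) ≤ ∑ i : Fin d, ∑ j : Fin d, if j < i then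
        c' i j * ((if Z = i then (1:ℝ) else 0) - (if Z = j then (1:ℝ) else 0)) else 0 := by
      apply Finset.sum_nonneg; intro i _
      apply Finset.sum_nonneg; intro j _
      by_cases h1 : j < i
      · have hZi : Z ≠ i := by
          intro h
          have hi : i.val = 0 := by rw [← h]
          have h3 : j.val < i.val := h1
          omega
        rw [if_pos h1, if_neg hZi]
        by_cases h2 : Z = j
        · rw [if_pos h2]
          nlinarith [(hc' i j h1).2]
        · rw [if_neg h2]; simp
      · rw [if_neg h1]
    have hLa : (χ L : ℝ) < (a:ℝ) := by
      have h := key L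
      have := (hc L).2
      linarith
    have hZa : (-1 : ℝ) < (χ Z : ℝ) := by
      have h := key Z
      have := (hc Z).1
      linarith
    have hL' : χ L < (a : ℤ) := by exact_mod_cast hLa
    have hZ' : (-1 : ℤ) < χ Z := by exact_mod_cast hZa
    have hmZ : χ Z ≤ χ m := hmono (show Z ≤ m by rw [Fin.le_def]; exact Nat.zero_le _)
    have hmL : χ m ≤ χ L := hmono (by
      rw [Fin.le_def]
      have := m.isLt
      simp only [hLdef]
      omega)
    omega
  · rintro ⟨hmono, hbd⟩
    refine ⟨⟨fun m => (χ m : ℝ) - ((a:ℝ)/2 - ε), fun _ _ => 0, fun i => ?_, ?_, ?_⟩, hmono⟩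
    · obtain ⟨h0, h1⟩ := hbd i
      have h0' : (0:ℝ) ≤ (χ i : ℝ) := by exact_mod_cast h0
      have h1' : (χ i : ℝ) ≤ (a:ℝ) - 1 := by
        have : ((χ i : ℤ) : ℝ) ≤ (((a:ℤ) - 1 : ℤ) : ℝ) := by exact_mod_cast h1
        simpa using this
      constructor <;> simp only [] <;> linarith
    · intro i j _; constructor <;> norm_num
    · funext m
      simp [Finset.sum_apply, ite_apply, Pi.single_apply, mul_ite, mul_one, mul_zero,
        Finset.sum_ite_eq]
end
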